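/- For d = 1 or 2, γ > 0, and k ∈ T^d such that E_{γ,k} is nonconstant, the integral ∫_{T^d} η(dq)/(E_max(k) - E_{γ,k}(q)) diverges to +∞, where E_max(k) = max_q E_{γ,k}(q). -/

import Mathlib

open MeasureTheory Real

instance : Fact (0 < 2 * π) := ⟨by positivity⟩

/-- Equip the circle `ℝ/2πℤ` with its Haar measure. -/
noncomputable instance : MeasureSpace Real.Angle :=
  inferInstanceAs (MeasureSpace (AddCircle (2 * π)))

instance : SigmaFinite (volume : Measure Real.Angle) :=
  inferInstanceAs (SigmaFinite (volume : Measure (AddCircle (2 * π))))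

instance : BorelSpace Real.Angle :=
  inferInstanceAs (BorelSpace (AddCircle (2 * π)))

/-- The lattice dispersion relation `ε(p) = 2∑ᵢ (1 - cos pⁱ)` on the torus `T^d`. -/
noncomputable def eps (d : ℕ) (p : Fin d → Real.Angle) : ℝ :=
  2 * ∑ i, (1 - (p i).cos)

/-- The normalized Haar measure `η` on the torus `T^d`. -/
noncomputable def haarT (d : ℕ) : Measure (Fin d → Real.Angle) :=
  (ENNReal.ofReal ((2 * π) ^ d))⁻¹ • volume

/-- The two-particle dispersion `E_{γ,k}(q) = ε(q) + γ ε(k - q)`. -/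
noncomputable def E2 (d : ℕ) (γ : ℝ) (k q : Fin d → Real.Angle) : ℝ :=
  eps d q + γ * eps d (k - q)

namespace Stmt5Aux

lemma angle_norm (θ : Real.Angle) : ‖θ‖ = |θ.toReal| := by
  conv_lhs => rw [← θ.coe_toReal]
  have hx1 : -π < θ.toReal := θ.neg_pi_lt_toReal
  have hx2 : θ.toReal ≤ π := θ.toReal_le_pi
  set x := θ.toReal with hxdef
  show ‖(x : AddCircle (2 * π))‖ = |x|
  rw [AddCircle.norm_eq]
  rcases eq_or_lt_of_le hx2 with h | h
  · have hr : round ((2 * π)⁻¹ * x) = 1 := by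
      rw [h, show (2 * π)⁻¹ * π = 1 / 2 by field_simp]
      norm_num [round_eq]
    rw [hr, h]
    push_cast
    rw [show π - 1 * (2 * π) = -π by ring, abs_neg, abs_of_nonneg pi_pos.le]
  · have hr : round ((2 * π)⁻¹ * x) = 0 := by
      rw [round_eq_zero_iff, inv_mul_eq_div]
      constructor
      · rw [le_div_iff₀ two_pi_pos]; nlinarith
      · rw [div_lt_iff₀ two_pi_pos]; nlinarith
    rw [hr]
    simp

lemma vol_cball (ψ : Real.Angle) {ε : ℝ} (h0 : 0 ≤ ε) (hπ : ε ≤ π) :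
    volume (Metric.closedBall ψ ε) = ENNReal.ofReal (2 * ε) := by
  have h := AddCircle.volume_closedBall (T := 2 * π) (x := show AddCircle (2 * π) from ψ) ε
  rw [min_eq_right (by linarith)] at h
  exact h

lemma one_sub_cos_le (x : ℝ) : 1 - Real.cos x ≤ x ^ 2 / 2 := by
  have h1 : Real.sin (x / 2) ^ 2 = 1 / 2 - Real.cos (2 * (x / 2)) / 2 :=
    Real.sin_sq_eq_half_sub _
  rw [show 2 * (x / 2) = x by ring] at h1
  have h2 : Real.sin (x / 2) ^ 2 ≤ (x / 2) ^ 2 := Real.sin_sq_le_sq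
  nlinarith

lemma angle_cos_le_one (φ : Real.Angle) : φ.cos ≤ 1 := by
  rw [← Real.Angle.cos_toReal]; exact Real.cos_le_one _

lemma angle_one_sub_cos (φ : Real.Angle) : 1 - φ.cos ≤ φ.toReal ^ 2 / 2 := by
  rw [← Real.Angle.cos_toReal]; exact one_sub_cos_le _

lemma angle_cos_lt_one {φ : Real.Angle} (h : φ.toReal ≠ 0) : φ.cos < 1 := by
  rw [← Real.Angle.cos_toReal]
  refine lt_of_le_of_ne (Real.cos_le_one _) fun hc => h ?_
  have h1 := φ.neg_pi_lt_toReal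
  have h2 := φ.toReal_le_pi
  have hπ := pi_pos
  exact (Real.cos_eq_one_iff_of_lt_of_lt (by linarith) (by linarith)).mp hc

lemma oneD (γ : ℝ) (s : Real.Angle) :
    ∃ (r : ℝ) (ψ : Real.Angle), 0 ≤ r ∧ ∀ θ : Real.Angle,
      2 * (1 - θ.cos) + γ * (2 * (1 - (s - θ).cos)) = (2 + 2 * γ) + r * (θ - ψ).cos := by
  induction s using Real.Angle.induction_on with
  | h u =>
    by_cases hz : (⟨-(2 + 2 * γ * Real.cos u), -(2 * γ * Real.sin u)⟩ : ℂ) = 0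
    · have ha : 2 + 2 * γ * Real.cos u = 0 := by
        have := congrArg Complex.re hz; simp at this; linarith
      have hb : 2 * γ * Real.sin u = 0 := by
        have := congrArg Complex.im hz; simp at this
        rcases this with h | h <;> simp [h]
      refine ⟨0, 0, le_refl 0, fun θ => ?_⟩
      induction θ using Real.Angle.induction_on with
      | h t =>
        rw [← Real.Angle.coe_sub, Real.Angle.cos_coe, Real.Angle.cos_coe, Real.cos_sub]
        linear_combination (-Real.cos t) * ha - Real.sin t * hb
    · set z : ℂ := ⟨-(2 + 2 * γ * Real.cos u), -(2 * γ * Real.sin u)⟩ with hzdef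
      have hrpos : 0 < ‖z‖ := norm_pos_iff.mpr hz
      refine ⟨‖z‖, ↑(Complex.arg z), (norm_nonneg z), fun θ => ?_⟩
      induction θ using Real.Angle.induction_on with
      | h t =>
        simp only [← Real.Angle.coe_sub, Real.Angle.cos_coe]
        rw [Real.cos_sub, Real.cos_sub, Complex.cos_arg hz, Complex.sin_arg z]
        have hre : z.re = -(2 + 2 * γ * Real.cos u) := rfl
        have him : z.im = -(2 * γ * Real.sin u) := rfl
        rw [hre, him]
        field_simp
        ring

end Stmt5Aux

/-- for `d = 1, 2` and `E_{γ,k}` nonconstant, the integral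
`∫ η(dq)/(E_max(k) - E_{γ,k}(q))` diverges to `+∞`. -/
theorem stmt5 (d : ℕ) (hd : d = 1 ∨ d = 2) (γ : ℝ) (hγ : 0 < γ)
    (k : Fin d → Real.Angle) (hnc : ∃ q q', E2 d γ k q ≠ E2 d γ k q') :
    ∫⁻ q, ENNReal.ofReal (sSup (Set.range (E2 d γ k)) - E2 d γ k q)⁻¹ ∂(haarT d) = ⊤ := by
  classical
  obtain ⟨q₀, q₁, hne⟩ := hnc
  choose r ψ hr hf using fun i => Stmt5Aux.oneD γ (k i)
  -- decomposition of E2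
  have hE2 : ∀ q : Fin d → Real.Angle,
      E2 d γ k q = ∑ i, ((2 + 2 * γ) + r i * ((q i - ψ i).cos)) := by
    intro q
    have h1 : E2 d γ k q
        = ∑ i, (2 * (1 - (q i).cos) + γ * (2 * (1 - (k i - q i).cos))) := by
      simp only [E2, eps, Pi.sub_apply, Finset.mul_sum, Finset.sum_add_distrib]
    rw [h1]
    exact Finset.sum_congr rfl fun i _ => hf i (q i)
  have hsum : ∀ v : Fin d → ℝ, ∑ i, ((2 + 2 * γ) + v i) = d * (2 + 2 * γ) + ∑ i, v i := by
    intro v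
    rw [Finset.sum_add_distrib, Finset.sum_const, Finset.card_univ, Fintype.card_fin,
      nsmul_eq_mul]
  set R : ℝ := ∑ i, r i with hRdef
  set M : ℝ := d * (2 + 2 * γ) + R with hMdef
  have hub : ∀ q, E2 d γ k q ≤ M := by
    intro q
    rw [hE2, hMdef, ← hsum r]
    refine Finset.sum_le_sum fun i _ => ?_
    have h1 := Stmt5Aux.angle_cos_le_one (q i - ψ i)
    nlinarith [hr i]
  have hmem : E2 d γ k ψ = M := by
    rw [hE2, hMdef, ← hsum r]
    refine Finset.sum_congr rfl fun i _ => ?_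
    rw [sub_self, Real.Angle.cos_zero, mul_one]
  have hsup : sSup (Set.range (E2 d γ k)) = M :=
    IsGreatest.csSup_eq ⟨⟨ψ, hmem⟩, by rintro x ⟨q, rfl⟩; exact hub q⟩
  have hRnn : 0 ≤ R := Finset.sum_nonneg fun i _ => hr i
  have hRpos : 0 < R := by
    rcases lt_or_eq_of_le hRnn with h | h
    · exact h
    · exfalso
      apply hne
      have hz : ∀ i, r i = 0 := fun i =>
        (Finset.sum_eq_zero_iff_of_nonneg fun j _ => hr j).mp h.symm i (Finset.mem_univ i)
      rw [hE2, hE2]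
      simp [hz]
  have hexist : ∃ i, 0 < r i := by
    by_contra h
    push_neg at h
    have : R ≤ 0 := Finset.sum_nonpos fun i _ => h i
    linarith
  -- gap formula
  have hgap : ∀ q, M - E2 d γ k q = ∑ i, r i * (1 - ((q i - ψ i).cos)) := by
    intro q
    rw [hE2, hsum, hMdef]
    simp only [mul_sub, mul_one, Finset.sum_sub_distrib]
    ring
  -- the cube sets
  set S : ℝ → Set (Fin d → Real.Angle) := fun ε =>
    Set.pi Set.univ fun i => if 0 < r i then Metric.closedBall (ψ i) ε else Set.univ
    with hSdef
  have hSmeas : ∀ ε, MeasurableSet (S ε) := by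
    intro ε
    refine MeasurableSet.univ_pi fun i => ?_
    by_cases hi : 0 < r i <;> simp [hi, measurableSet_closedBall]
  have hSsub : ∀ {ε ε' : ℝ}, ε ≤ ε' → S ε ⊆ S ε' := by
    intro ε ε' h
    refine Set.pi_mono fun i _ => ?_
    by_cases hi : 0 < r i <;> simp only [hi, if_true, if_false]
    · exact Metric.closedBall_subset_closedBall h
    · exact subset_rfl
  set m : ℕ := (Finset.univ.filter fun i => 0 < r i).card with hmdef
  set m' : ℕ := (Finset.univ.filter fun i => ¬ 0 < r i).card with hm'def
  have hm1 : 1 ≤ m :=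
    Finset.card_pos.mpr ⟨hexist.choose, by simp [hexist.choose_spec]⟩
  have hm2 : m ≤ 2 := by
    have : m ≤ d := le_trans (Finset.card_filter_le _ _) (by simp)
    rcases hd with h | h <;> omega
  have hvol : ∀ {ε : ℝ}, 0 < ε → ε ≤ π →
      volume (S ε) = ENNReal.ofReal ((2 * ε) ^ m * (2 * π) ^ m') := by
    intro ε h0 hπ
    rw [hSdef]
    rw [volume_pi_pi]
    have hfac : ∀ i : Fin d, volume (if 0 < r i then Metric.closedBall (ψ i) ε else Set.univ)
        = if 0 < r i then ENNReal.ofReal (2 * ε) else ENNReal.ofReal (2 * π) := by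
      intro i
      by_cases hi : 0 < r i <;> simp only [hi, if_true, if_false]
      · exact Stmt5Aux.vol_cball _ h0.le hπ
      · exact AddCircle.measure_univ (T := 2 * π)
    simp only [hfac]
    rw [Finset.prod_ite, Finset.prod_const, Finset.prod_const,
      ← ENNReal.ofReal_pow (by positivity), ← ENNReal.ofReal_pow (by positivity),
      ← ENNReal.ofReal_mul (by positivity)]
  -- the radii
  set e : ℕ → ℝ := fun n => π / 2 ^ (n + 1) with hedef
  have he0 : ∀ n, 0 < e n := fun n => by positivity
  have heπ : ∀ n, e n ≤ π := fun n => by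
    rw [hedef]
    apply div_le_self pi_pos.le
    exact one_le_pow₀ one_le_two
  have hehalf : ∀ n, 2 * e (n + 1) = e n := fun n => by
    rw [hedef]
    field_simp
    ring
  have heanti : ∀ {a b : ℕ}, a ≤ b → e b ≤ e a := by
    intro a b hab
    apply div_le_div_of_nonneg_left pi_pos.le (by positivity)
    exact pow_le_pow_right₀ one_le_two (by omega)
  set A : ℕ → Set (Fin d → Real.Angle) := fun n => S (e n) \ S (e (n + 1)) with hAdef
  have hAmeas : ∀ n, MeasurableSet (A n) := fun n => (hSmeas _).diff (hSmeas _)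
  have hAdisj : Pairwise (Function.onFun Disjoint A) := by
    have key : ∀ a b, a < b → Disjoint (A a) (A b) := by
      intro a b hab
      refine Set.disjoint_left.mpr fun q hqa hqb => ?_
      exact hqa.2 (hSsub (heanti (by omega : a + 1 ≤ b)) hqb.1)
    intro a b hab
    rcases hab.lt_or_gt with h | h
    · exact key a b h
    · exact (key b a h).symm
  set δ : ℝ := 2 * (2 * π) ^ m' / (R * π) with hδdef
  have hδpos : 0 < δ := by positivity
  have hkey : ∀ n, ENNReal.ofReal δ ≤
      ∫⁻ q in A n, ENNReal.ofReal (M - E2 d γ k q)⁻¹ ∂volume := by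
    intro n
    set ε : ℝ := e n with hεdef
    have hε0 : 0 < ε := he0 n
    have hεπ : ε ≤ π := heπ n
    -- gap upper bound on S ε
    have hup : ∀ q ∈ S ε, M - E2 d γ k q ≤ R * ε ^ 2 / 2 := by
      intro q hq
      rw [hgap]
      have hterm : ∀ i ∈ Finset.univ, r i * (1 - (q i - ψ i).cos) ≤ r i * (ε ^ 2 / 2) := by
        intro i _
        by_cases hi : 0 < r i
        · have hqi := Set.mem_univ_pi.mp hq i
          rw [if_pos hi] at hqi
          have ht : |(q i - ψ i).toReal| ≤ ε := by
            rw [← Stmt5Aux.angle_norm, ← dist_eq_norm]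
            exact Metric.mem_closedBall.mp hqi
          have h1 := Stmt5Aux.angle_one_sub_cos (q i - ψ i)
          have h2 : (q i - ψ i).toReal ^ 2 ≤ ε ^ 2 := by
            have := abs_le.mp ht
            nlinarith
          nlinarith [hr i]
        · have hz : r i = 0 := le_antisymm (not_lt.mp hi) (hr i)
          simp [hz]
      calc ∑ i, r i * (1 - (q i - ψ i).cos) ≤ ∑ i, r i * (ε ^ 2 / 2) :=
            Finset.sum_le_sum hterm
        _ = R * ε ^ 2 / 2 := by rw [← Finset.sum_mul]; ring
    -- gap positivity on A n
    have hpos : ∀ q ∈ A n, 0 < M - E2 d γ k q := by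
      intro q hq
      obtain ⟨hq1, hq2⟩ := hq
      have hq2' : ¬ ∀ i, q i ∈ (if 0 < r i then Metric.closedBall (ψ i) (e (n + 1))
          else Set.univ) := fun h => hq2 (Set.mem_univ_pi.mpr h)
      push_neg at hq2'
      obtain ⟨i, hqi⟩ := hq2'
      have hi : 0 < r i := by
        by_contra h
        rw [if_neg h] at hqi
        exact hqi (Set.mem_univ _)
      rw [if_pos hi] at hqi
      have ht : e (n + 1) < |(q i - ψ i).toReal| := by
        rw [← Stmt5Aux.angle_norm, ← dist_eq_norm]
        exact lt_of_not_ge fun h => hqi (Metric.mem_closedBall.mpr h)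
      have htne : (q i - ψ i).toReal ≠ 0 := by
        intro h
        rw [h] at ht
        simp at ht
        linarith [he0 (n + 1)]
      have hcos : (q i - ψ i).cos < 1 := Stmt5Aux.angle_cos_lt_one htne
      rw [hgap]
      calc (0 : ℝ) < r i * (1 - (q i - ψ i).cos) := mul_pos hi (by linarith)
        _ ≤ ∑ j, r j * (1 - (q j - ψ j).cos) :=
            Finset.single_le_sum (f := fun j => r j * (1 - (q j - ψ j).cos))
              (fun j _ => mul_nonneg (hr j)
              (by linarith [Stmt5Aux.angle_cos_le_one (q j - ψ j)])) (Finset.mem_univ i)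
    -- integrand lower bound
    have hF : ∀ q ∈ A n, ENNReal.ofReal (R * ε ^ 2 / 2)⁻¹
        ≤ ENNReal.ofReal (M - E2 d γ k q)⁻¹ := by
      intro q hq
      exact ENNReal.ofReal_le_ofReal (inv_anti₀ (hpos q hq) (hup q hq.1))
    -- volume lower bound
    have hvA : ENNReal.ofReal (ε ^ m * (2 * π) ^ m') ≤ volume (A n) := by
      rw [hAdef]
      have hsub : S (e (n + 1)) ⊆ S (e n) := hSsub (heanti (Nat.le_succ n))
      rw [measure_diff hsub (hSmeas _).nullMeasurableSet
        (by rw [hvol (he0 (n + 1)) (heπ (n + 1))]; exact ENNReal.ofReal_ne_top)]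
      rw [hvol (he0 n) (heπ n), hvol (he0 (n + 1)) (heπ (n + 1)), hehalf n,
        ← ENNReal.ofReal_sub _ (by positivity)]
      apply ENNReal.ofReal_le_ofReal
      have h2m : (2 : ℝ) ≤ 2 ^ m := by
        calc (2 : ℝ) = 2 ^ 1 := (pow_one 2).symm
          _ ≤ 2 ^ m := pow_le_pow_right₀ one_le_two hm1
      have hεm : 0 ≤ ε ^ m := by positivity
      have hπm' : 0 ≤ (2 * π) ^ m' := by positivity
      have h1 : (2 * ε) ^ m = 2 ^ m * ε ^ m := mul_pow 2 ε m
      nlinarith [mul_nonneg hεm hπm']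
    -- real arithmetic
    have hεm2 : ε ^ 2 ≤ π * ε ^ m := by
      interval_cases m
      · rw [pow_one]
        nlinarith
      · nlinarith [Real.pi_gt_three]
    have hreal : δ ≤ (R * ε ^ 2 / 2)⁻¹ * (ε ^ m * (2 * π) ^ m') := by
      rw [hδdef]
      rw [inv_eq_one_div, div_mul_eq_mul_div, one_mul, div_le_div_iff₀ (by positivity)
        (by positivity)]
      have hπm' : 0 < (2 * π) ^ m' := by positivity
      nlinarith [mul_le_mul_of_nonneg_left hεm2 (le_of_lt (mul_pos hRpos hπm'))]
    calc ENNReal.ofReal δ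
        ≤ ENNReal.ofReal ((R * ε ^ 2 / 2)⁻¹ * (ε ^ m * (2 * π) ^ m')) :=
          ENNReal.ofReal_le_ofReal hreal
      _ = ENNReal.ofReal (R * ε ^ 2 / 2)⁻¹ * ENNReal.ofReal (ε ^ m * (2 * π) ^ m') :=
          ENNReal.ofReal_mul (by positivity)
      _ ≤ ENNReal.ofReal (R * ε ^ 2 / 2)⁻¹ * volume (A n) := mul_le_mul_right hvA _
      _ = ∫⁻ _ in A n, ENNReal.ofReal (R * ε ^ 2 / 2)⁻¹ ∂volume :=
          (setLIntegral_const _ _).symm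
      _ ≤ ∫⁻ q in A n, ENNReal.ofReal (M - E2 d γ k q)⁻¹ ∂volume :=
          setLIntegral_mono' (hAmeas n) hF
  -- assemble
  have htop : ∫⁻ q, ENNReal.ofReal (M - E2 d γ k q)⁻¹ ∂volume = ⊤ := by
    refine top_unique ?_
    calc (⊤ : ENNReal) = ∑' (_ : ℕ), ENNReal.ofReal δ :=
        (ENNReal.tsum_const_eq_top_of_ne_zero
          (ne_of_gt (ENNReal.ofReal_pos.mpr hδpos))).symm
      _ ≤ ∑' n, ∫⁻ q in A n, ENNReal.ofReal (M - E2 d γ k q)⁻¹ ∂volume :=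
          ENNReal.tsum_le_tsum hkey
      _ = ∫⁻ q in ⋃ n, A n, ENNReal.ofReal (M - E2 d γ k q)⁻¹ ∂volume :=
          (lintegral_iUnion hAmeas hAdisj _).symm
      _ ≤ ∫⁻ q, ENNReal.ofReal (M - E2 d γ k q)⁻¹ ∂volume :=
          setLIntegral_le_lintegral _ _
  simp only [hsup]
  unfold haarT
  rw [lintegral_smul_measure, htop]
  exact ENNReal.mul_top (ENNReal.inv_ne_zero.mpr ENNReal.ofReal_ne_top)
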